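/- arXiv:1912.01990 — 4 statements merged into one kernel-verified Lean document; each statement's English description precedes it below -/
import Mathlib

section
/- Let G be a finite simple graph, let X be a nonempty subset of V(G), and let H_P and H_Q be subgraphs of G such that V(H_P) ∩ V(H_Q) = X, E(H_P) ∩ E(H_Q) = ∅, and every connected component of H_P and every connected component of H_Q contains at least one vertex of X. Let P be the partition of X defined by H_P and let Q be the partition of X defined by H_Q. Then the graph H_P ∪ H_Q is connected if and only if the join P ⊔ Q is the trivial partition {X} (i.e., P ⊔ Q relates every pair of elements of X). -/
open SimpleGraph

section Aux
variable {V : Type*} {G : SimpleGraph V}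

private lemma mem_verts_of_reach_ne {H : G.Subgraph} {u v : V}
    (h : H.spanningCoe.Reachable u v) (hne : u ≠ v) : u ∈ H.verts := by
  obtain ⟨w⟩ := h
  cases w with
  | nil => exact absurd rfl hne
  | cons h' _ => exact (h' : H.Adj _ _).fst_mem

private lemma spanningCoe_reach_of_coe {H : G.Subgraph} {u v : H.verts}
    (h : H.coe.Reachable u v) : H.spanningCoe.Reachable u v :=
  h.map ⟨Subtype.val, fun h => h⟩

private lemma coe_reach_of_spanningCoe {H : G.Subgraph} {u v : V}
    (hu : u ∈ H.verts) (hv : v ∈ H.verts)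
    (h : H.spanningCoe.Reachable u v) : H.coe.Reachable ⟨u, hu⟩ ⟨v, hv⟩ := by
  obtain ⟨w⟩ := h
  induction w with
  | nil => rfl
  | @cons a b c h' p ih =>
    have hb : b ∈ H.verts := (h' : H.Adj a b).snd_mem
    exact (SimpleGraph.Adj.reachable (by exact h' : H.coe.Adj ⟨a, hu⟩ ⟨b, hb⟩)).trans (ih hb hv)

end Aux

/-- With `HP`, `HQ` subgraphs of a finite simple graph `G` such that
`V(HP) ∩ V(HQ) = X` (nonempty), `E(HP) ∩ E(HQ) = ∅`, and every connected component of `HP`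
and of `HQ` containing a vertex of `X`: the union `HP ∪ HQ` is connected iff the join
`P ⊔ Q` of the partitions of `X` defined by `HP` and `HQ` is the trivial partition `{X}`,
i.e. iff the equivalence closure of the union (restricted to `X`) of the two
"same connected component" relations relates every pair of elements of `X`. -/
theorem union_connected_iff_partition_join_trivial {V : Type*} [Fintype V] (G : SimpleGraph V)
    (HP HQ : G.Subgraph) (X : Set V)
    (hX : X.Nonempty)
    (hV : HP.verts ∩ HQ.verts = X)
    (hE : HP.edgeSet ∩ HQ.edgeSet = ∅)
    (hCP : ∀ v ∈ HP.verts, ∃ x ∈ X, HP.spanningCoe.Reachable v x)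
    (hCQ : ∀ v ∈ HQ.verts, ∃ x ∈ X, HQ.spanningCoe.Reachable v x) :
    (HP ⊔ HQ).Connected ↔
      ∀ x ∈ X, ∀ y ∈ X,
        Relation.EqvGen
          (fun a b => a ∈ X ∧ b ∈ X ∧
            (HP.spanningCoe.Reachable a b ∨ HQ.spanningCoe.Reachable a b)) x y := by
  set r := fun a b => a ∈ X ∧ b ∈ X ∧
      (HP.spanningCoe.Reachable a b ∨ HQ.spanningCoe.Reachable a b) with hr
  have hXP : X ⊆ HP.verts := hV ▸ Set.inter_subset_left
  have hXQ : X ⊆ HQ.verts := hV ▸ Set.inter_subset_right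
  constructor
  · intro hconn x hx y hy
    -- key lemma by induction on walks in the union
    have key : ∀ {u v : V} (w : (HP ⊔ HQ).spanningCoe.Walk u v), v ∈ X →
        ∀ z ∈ X, (HP.spanningCoe.Reachable u z ∨ HQ.spanningCoe.Reachable u z) →
        Relation.EqvGen r z v := by
      intro u v w
      induction w with
      | nil =>
        intro hv z hz hrz
        exact Relation.EqvGen.rel _ _ ⟨hz, hv, hrz.imp SimpleGraph.Reachable.symm SimpleGraph.Reachable.symm⟩
      | @cons a b c h p ih =>
        intro hv z hz hrz
        have hab : HP.Adj a b ∨ HQ.Adj a b := h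
        rcases hrz with hrz | hrz
        · rcases hab with hab | hab
          · exact ih hv z hz (Or.inl ((SimpleGraph.Adj.reachable
              (by exact hab.symm : HP.spanningCoe.Adj b a)).trans hrz))
          · by_cases hza : a = z
            · subst hza
              exact ih hv a hz (Or.inr (SimpleGraph.Adj.reachable
                (by exact hab.symm : HQ.spanningCoe.Adj b a)))
            · have haP : a ∈ HP.verts := mem_verts_of_reach_ne hrz hza
              have haX : a ∈ X := hV ▸ ⟨haP, hab.fst_mem⟩
              refine (Relation.EqvGen.rel _ _ ⟨hz, haX, Or.inl hrz.symm⟩).trans _ _ _ ?_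
              exact ih hv a haX (Or.inr (SimpleGraph.Adj.reachable
                (by exact hab.symm : HQ.spanningCoe.Adj b a)))
        · rcases hab with hab | hab
          · by_cases hza : a = z
            · subst hza
              exact ih hv a hz (Or.inl (SimpleGraph.Adj.reachable
                (by exact hab.symm : HP.spanningCoe.Adj b a)))
            · have haQ : a ∈ HQ.verts := mem_verts_of_reach_ne hrz hza
              have haX : a ∈ X := hV ▸ ⟨hab.fst_mem, haQ⟩
              refine (Relation.EqvGen.rel _ _ ⟨hz, haX, Or.inr hrz.symm⟩).trans _ _ _ ?_
              exact ih hv a haX (Or.inl (SimpleGraph.Adj.reachable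
                (by exact hab.symm : HP.spanningCoe.Adj b a)))
          · exact ih hv z hz (Or.inr ((SimpleGraph.Adj.reachable
              (by exact hab.symm : HQ.spanningCoe.Adj b a)).trans hrz))
    have hxU : x ∈ (HP ⊔ HQ).verts := Or.inl (hXP hx)
    have hyU : y ∈ (HP ⊔ HQ).verts := Or.inl (hXP hy)
    have hreach : (HP ⊔ HQ).spanningCoe.Reachable x y :=
      spanningCoe_reach_of_coe (hconn ⟨x, hxU⟩ ⟨y, hyU⟩)
    obtain ⟨w⟩ := hreach
    exact key w hy x hx (Or.inl (SimpleGraph.Reachable.refl x))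
  · intro hjoin
    rw [SimpleGraph.Subgraph.connected_iff]
    constructor
    · rw [SimpleGraph.Subgraph.preconnected_iff]
      rintro ⟨u, hu⟩ ⟨v, hv⟩
      have mono : ∀ {a b : V}, HP.spanningCoe.Reachable a b ∨ HQ.spanningCoe.Reachable a b →
          (HP ⊔ HQ).spanningCoe.Reachable a b := by
        rintro a b (h | h)
        · exact h.mono fun _ _ hab => Or.inl hab
        · exact h.mono fun _ _ hab => Or.inr hab
      have anchor : ∀ w ∈ (HP ⊔ HQ).verts, ∃ x ∈ X, (HP ⊔ HQ).spanningCoe.Reachable w x := by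
        rintro w (hw | hw)
        · obtain ⟨x, hx, hrx⟩ := hCP w hw
          exact ⟨x, hx, mono (Or.inl hrx)⟩
        · obtain ⟨x, hx, hrx⟩ := hCQ w hw
          exact ⟨x, hx, mono (Or.inr hrx)⟩
      obtain ⟨x, hx, hux⟩ := anchor u hu
      obtain ⟨y, hy, hvy⟩ := anchor v hv
      have hEG : ∀ a b, Relation.EqvGen r a b → (HP ⊔ HQ).spanningCoe.Reachable a b := by
        intro a b h
        induction h with
        | rel a b hab => exact mono hab.2.2
        | refl a => exact SimpleGraph.Reachable.refl a
        | symm a b _ ih => exact ih.symm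
        | trans a b c _ _ ih1 ih2 => exact ih1.trans ih2
      have hxy : (HP ⊔ HQ).spanningCoe.Reachable x y := hEG x y (hjoin x hx y hy)
      exact coe_reach_of_spanningCoe hu hv ((hux.trans hxy).trans hvy.symm)
    · obtain ⟨x, hx⟩ := hX
      exact ⟨x, Or.inl (hXP hx)⟩
end

section
/- Let G be a finite simple graph, let X be a nonempty subset of V(G), and let H_P and H_Q be subgraphs of G with V(H_P) ∩ V(H_Q) = X and E(H_P) ∩ E(H_Q) = ∅. Let G_P and G_Q be simple graphs on the vertex set X such that for all x, y ∈ X, x and y lie in the same connected component of G_P if and only if they lie in the same connected component of H_P, and for all x, y ∈ X, x and y lie in the same connected component of G_Q if and only if they lie in the same connected component of H_Q. Then for all x₁, x₂ ∈ X, x₁ and x₂ lie in the same connected component of H_P ∪ H_Q if and only if x₁ and x₂ lie in the same connected component of G_P ∪ G_Q. -/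
open SimpleGraph

private lemma walk_end_mem {V : Type*} {G : SimpleGraph V} {H : G.Subgraph} {a b : V}
    (w : H.spanningCoe.Walk a b) : b ∈ H.verts ∨ a = b := by
  induction w with
  | nil => exact Or.inr rfl
  | cons h p ih =>
    rcases ih with hb | rfl
    · exact Or.inl hb
    · exact Or.inl (H.edge_vert h.symm)

private lemma reach_end_mem {V : Type*} {G : SimpleGraph V} {H : G.Subgraph} {a b : V}
    (h : H.spanningCoe.Reachable a b) (hne : a ≠ b) : b ∈ H.verts := by
  obtain ⟨w⟩ := h
  rcases walk_end_mem w with hb | rfl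
  · exact hb
  · exact absurd rfl hne

private lemma reach_sup_rtg {V : Type*} {G1 G2 : SimpleGraph V} {x y : V}
    (h : (G1 ⊔ G2).Reachable x y) :
    Relation.ReflTransGen (fun a b => G1.Reachable a b ∨ G2.Reachable a b) x y := by
  obtain ⟨w⟩ := h
  induction w with
  | nil => exact .refl
  | cons h p ih =>
    refine Relation.ReflTransGen.head ?_ ih
    rcases h with h | h
    · exact Or.inl h.reachable
    · exact Or.inr h.reachable

/-- Let `HP`, `HQ` be subgraphs of a finite simple graph `G` with
`V(HP) ∩ V(HQ) = X` (nonempty) and `E(HP) ∩ E(HQ) = ∅`, and let `GP`, `GQ` be simple graphs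
on the vertex set `X` whose "same connected component" relations agree with those of `HP`
and `HQ` respectively (on pairs of vertices of `X`). Then two vertices of `X` lie in the
same connected component of `HP ∪ HQ` iff they lie in the same connected component of
`GP ∪ GQ`. -/
theorem reachable_union_iff_reachable_union_on_X {V : Type*} [Fintype V] (G : SimpleGraph V)
    (HP HQ : G.Subgraph) (X : Set V)
    (hX : X.Nonempty)
    (hV : HP.verts ∩ HQ.verts = X)
    (hE : HP.edgeSet ∩ HQ.edgeSet = ∅)
    (GP GQ : SimpleGraph X)
    (hGP : ∀ x y : X, GP.Reachable x y ↔ HP.spanningCoe.Reachable (x : V) (y : V))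
    (hGQ : ∀ x y : X, GQ.Reachable x y ↔ HQ.spanningCoe.Reachable (x : V) (y : V)) :
    ∀ x y : X,
      (HP ⊔ HQ).spanningCoe.Reachable (x : V) (y : V) ↔ (GP ⊔ GQ).Reachable x y := by
  have hsup : (HP ⊔ HQ).spanningCoe = HP.spanningCoe ⊔ HQ.spanningCoe := by
    ext a b
    simp [SimpleGraph.Subgraph.spanningCoe_adj]
  have hmem : ∀ u : V, u ∈ HP.verts → u ∈ HQ.verts → u ∈ X := fun u h1 h2 => hV ▸ ⟨h1, h2⟩
  intro x y
  constructor
  · intro h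
    rw [hsup] at h
    have hRT := reach_sup_rtg h
    -- strengthened induction
    suffices H : ∀ u : V, Relation.ReflTransGen
        (fun a b => HP.spanningCoe.Reachable a b ∨ HQ.spanningCoe.Reachable a b) u (y : V) →
        (∀ a : X, HP.spanningCoe.Reachable (a : V) u → (GP ⊔ GQ).Reachable a y) ∧
        (∀ a : X, HQ.spanningCoe.Reachable (a : V) u → (GP ⊔ GQ).Reachable a y) by
      exact (H x hRT).1 x (Reachable.refl _)
    intro u hu
    induction hu using Relation.ReflTransGen.head_induction_on with
    | refl =>
      constructor
      · intro a hP
        exact Reachable.mono le_sup_left ((hGP a y).mpr hP)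
      · intro a hQ
        exact Reachable.mono le_sup_right ((hGQ a y).mpr hQ)
    | head hstep hrest ih =>
      rename_i u v
      constructor
      · intro a hPa
        rcases hstep with hP | hQ
        · exact ih.1 a (hPa.trans hP)
        · by_cases huv : u = v
          · exact ih.1 a (huv ▸ hPa)
          · by_cases hau : (a : V) = u
            · exact ih.2 a (hau ▸ hQ)
            · have hu1 : u ∈ HP.verts := reach_end_mem hPa hau
              have hu2 : u ∈ HQ.verts := reach_end_mem hQ.symm (Ne.symm huv)
              have huX : u ∈ X := hmem u hu1 hu2
              have h1 : (GP ⊔ GQ).Reachable a ⟨u, huX⟩ :=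
                Reachable.mono le_sup_left ((hGP a ⟨u, huX⟩).mpr hPa)
              exact h1.trans (ih.2 ⟨u, huX⟩ hQ)
      · intro a hQa
        rcases hstep with hP | hQ
        · by_cases huv : u = v
          · exact ih.2 a (huv ▸ hQa)
          · by_cases hau : (a : V) = u
            · exact ih.1 a (hau ▸ hP)
            · have hu2 : u ∈ HQ.verts := reach_end_mem hQa hau
              have hu1 : u ∈ HP.verts := reach_end_mem hP.symm (Ne.symm huv)
              have huX : u ∈ X := hmem u hu1 hu2
              have h1 : (GP ⊔ GQ).Reachable a ⟨u, huX⟩ :=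
                Reachable.mono le_sup_right ((hGQ a ⟨u, huX⟩).mpr hQa)
              exact h1.trans (ih.1 ⟨u, huX⟩ hP)
        · exact ih.2 a (hQa.trans hQ)
  · intro h
    rw [hsup]
    obtain ⟨w⟩ := h
    induction w with
    | nil => exact Reachable.refl _
    | cons hadj p ih =>
      refine Reachable.trans ?_ ih
      rcases hadj with hadj | hadj
      · exact Reachable.mono le_sup_left ((hGP _ _).mp hadj.reachable)
      · exact Reachable.mono le_sup_right ((hGQ _ _).mp hadj.reachable)
end

section
/- Let G be a finite simple graph, let X be a nonempty subset of V(G), let O ⊆ X, and let A and B be subgraphs of G such that: V(A) ∩ V(B) = X; E(A) ∩ E(B) = ∅; every connected component of A and every connected component of B contains at least one vertex of X; the set of vertices of odd degree in A is exactly O and the set of vertices of odd degree in B is exactly O; and the join of the partition of X defined by A with the partition of X defined by B is the trivial partition {X}. Then A ∪ B is Eulerian; that is, A ∪ B is connected and every vertex of A ∪ B has even degree in A ∪ B. -/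
private lemma walk_of_spanningCoe_reachable {V : Type*} {G : SimpleGraph V}
    {H : G.Subgraph} {u v : V} (hu : u ∈ H.verts)
    (h : H.spanningCoe.Reachable u v) : ∃ p : G.Walk u v, p.toSubgraph ≤ H := by
  obtain ⟨p⟩ := h
  induction p with
  | nil =>
    exact ⟨SimpleGraph.Walk.nil, by
      simpa [SimpleGraph.singletonSubgraph_le_iff] using hu⟩
  | @cons a b c hab q ih =>
    have hab' : H.Adj a b := hab
    obtain ⟨p, hp⟩ := ih (H.edge_vert hab'.symm)
    exact ⟨SimpleGraph.Walk.cons hab'.adj_sub p, by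
      simp only [SimpleGraph.Walk.toSubgraph, sup_le_iff]
      exact ⟨SimpleGraph.subgraphOfAdj_le_of_adj H hab', hp⟩⟩

/-- Let `A`, `B` be subgraphs of a finite simple graph `G` with
`V(A) ∩ V(B) = X` (nonempty), `E(A) ∩ E(B) = ∅`, every connected component of `A` and of
`B` containing a vertex of `X`, the sets of odd-degree vertices of `A` and of `B` both
equal to `O ⊆ X`, and the join of the partitions of `X` defined by `A` and by `B` the
trivial partition `{X}`. Then `A ⊔ B` is Eulerian: it is connected and every one of its
vertices has even degree in it. -/
theorem union_eulerian {V : Type*} [Fintype V] (G : SimpleGraph V)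
    (A B : G.Subgraph) (X O : Set V)
    (hX : X.Nonempty)
    (hO : O ⊆ X)
    (hV : A.verts ∩ B.verts = X)
    (hE : A.edgeSet ∩ B.edgeSet = ∅)
    (hCA : ∀ v ∈ A.verts, ∃ x ∈ X, A.spanningCoe.Reachable v x)
    (hCB : ∀ v ∈ B.verts, ∃ x ∈ X, B.spanningCoe.Reachable v x)
    (hOA : {v : V | Odd ((A.neighborSet v).ncard)} = O)
    (hOB : {v : V | Odd ((B.neighborSet v).ncard)} = O)
    (hJoin : ∀ x ∈ X, ∀ y ∈ X,
      Relation.EqvGen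
        (fun a b => a ∈ X ∧ b ∈ X ∧
          (A.spanningCoe.Reachable a b ∨ B.spanningCoe.Reachable a b)) x y) :
    (A ⊔ B).Connected ∧
      ∀ v ∈ (A ⊔ B).verts, Even (((A ⊔ B).neighborSet v).ncard) := by
  have hXA : X ⊆ A.verts := hV ▸ Set.inter_subset_left
  have hXB : X ⊆ B.verts := hV ▸ Set.inter_subset_right
  have hAle : A.spanningCoe ≤ (A ⊔ B).spanningCoe :=
    SimpleGraph.Subgraph.spanningCoe_le_of_le le_sup_left
  have hBle : B.spanningCoe ≤ (A ⊔ B).spanningCoe :=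
    SimpleGraph.Subgraph.spanningCoe_le_of_le le_sup_right
  -- reachability between points of X in (A ⊔ B).spanningCoe
  have hXreach : ∀ x y, Relation.EqvGen
        (fun a b => a ∈ X ∧ b ∈ X ∧
          (A.spanningCoe.Reachable a b ∨ B.spanningCoe.Reachable a b)) x y →
      (A ⊔ B).spanningCoe.Reachable x y := by
    intro x y h
    induction h with
    | rel a b hab =>
      rcases hab.2.2 with h | h
      · exact h.mono hAle
      · exact h.mono hBle
    | refl a => exact SimpleGraph.Reachable.refl a
    | symm a b _ ih => exact ih.symm
    | trans a b c _ _ ih1 ih2 => exact ih1.trans ih2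
  obtain ⟨x₀, hx₀⟩ := hX
  -- every vertex of A ⊔ B reaches x₀
  have key : ∀ u ∈ (A ⊔ B).verts, ∃ p : G.Walk u x₀, p.toSubgraph ≤ A ⊔ B := by
    intro u hu
    have hr : (A ⊔ B).spanningCoe.Reachable u x₀ := by
      rcases hu with hu | hu
      · obtain ⟨x, hx, hr⟩ := hCA u hu
        exact (hr.mono hAle).trans (hXreach x x₀ (hJoin x hx x₀ hx₀))
      · obtain ⟨x, hx, hr⟩ := hCB u hu
        exact (hr.mono hBle).trans (hXreach x x₀ (hJoin x hx x₀ hx₀))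
    exact walk_of_spanningCoe_reachable hu hr
  constructor
  · rw [SimpleGraph.Subgraph.connected_iff_forall_exists_walk_subgraph]
    refine ⟨⟨x₀, Or.inl (hXA hx₀)⟩, ?_⟩
    intro u v hu hv
    obtain ⟨p, hp⟩ := key u hu
    obtain ⟨q, hq⟩ := key v hv
    refine ⟨p.append q.reverse, ?_⟩
    rw [SimpleGraph.Walk.toSubgraph_append, SimpleGraph.Walk.toSubgraph_reverse]
    exact sup_le hp hq
  · intro v _
    have hdisj : Disjoint (A.neighborSet v) (B.neighborSet v) := by
      rw [Set.disjoint_left]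
      intro w hwA hwB
      have : s(v, w) ∈ A.edgeSet ∩ B.edgeSet := ⟨hwA, hwB⟩
      simp [hE] at this
    rw [SimpleGraph.Subgraph.neighborSet_sup,
      Set.ncard_union_eq hdisj (Set.toFinite _) (Set.toFinite _)]
    have hA : Odd ((A.neighborSet v).ncard) ↔ v ∈ O := by
      rw [← hOA]; rfl
    have hB : Odd ((B.neighborSet v).ncard) ↔ v ∈ O := by
      rw [← hOB]; rfl
    rcases Nat.even_or_odd ((A.neighborSet v).ncard) with h | h
    · have : ¬ Odd ((B.neighborSet v).ncard) := by
        rw [hB, ← hA]; exact (Nat.not_odd_iff_even.mpr h)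
      exact h.add (Nat.not_odd_iff_even.mp this)
    · exact Odd.add_odd h (hB.mpr (hA.mp h))
end

section
/- Let G be a finite simple graph, let X be a nonempty subset of V(G), and let v be a vertex of G with v ∉ X. Let A and B be subgraphs of G such that V(A) ∩ V(B) = X ∪ {v}, E(A) ∩ E(B) = ∅, every connected component of A and every connected component of B contains at least one vertex of X ∪ {v}, and v has degree 0 in B. If A ∪ B is connected, then there exists v' ∈ X such that v and v' lie in the same connected component of A. -/
/-- Let `A`, `B` be subgraphs of a finite simple graph `G`, let `X` be a
nonempty vertex subset and `v ∉ X` a vertex, with `V(A) ∩ V(B) = X ∪ {v}`,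
`E(A) ∩ E(B) = ∅`, every connected component of `A` and of `B` containing a vertex of
`X ∪ {v}`, and `v` of degree `0` in `B`. If `A ∪ B` is connected then some `v' ∈ X` lies
in the same connected component of `A` as `v`. -/
theorem exists_X_vertex_in_component_of_v {V : Type*} [Fintype V] (G : SimpleGraph V)
    (A B : G.Subgraph) (X : Set V) (v : V)
    (hX : X.Nonempty)
    (hv : v ∉ X)
    (hV : A.verts ∩ B.verts = X ∪ {v})
    (hE : A.edgeSet ∩ B.edgeSet = ∅)
    (hCA : ∀ u ∈ A.verts, ∃ x ∈ X ∪ {v}, A.spanningCoe.Reachable u x)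
    (hCB : ∀ u ∈ B.verts, ∃ x ∈ X ∪ {v}, B.spanningCoe.Reachable u x)
    (hdeg : (B.neighborSet v).ncard = 0)
    (hConn : (A ⊔ B).Connected) :
    ∃ v' ∈ X, A.spanningCoe.Reachable v v' := by
  by_contra hcon
  push_neg at hcon
  obtain ⟨x, hxX⟩ := hX
  have hvA : v ∈ A.verts := by
    have : v ∈ X ∪ {v} := Or.inr rfl
    rw [← hV] at this; exact this.1
  have hxA : x ∈ A.verts := by
    have : x ∈ X ∪ {v} := Or.inl hxX
    rw [← hV] at this; exact this.1
  have hvS : v ∈ (A ⊔ B).verts := Or.inl hvA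
  have hxS : x ∈ (A ⊔ B).verts := Or.inl hxA
  have hB0 : B.neighborSet v = ∅ := by
    rwa [Set.ncard_eq_zero (Set.toFinite _)] at hdeg
  have memA : ∀ u : V, A.spanningCoe.Reachable v u → u ∈ A.verts := by
    intro u h
    obtain ⟨p⟩ := h.symm
    cases p with
    | nil => exact hvA
    | cons hadj _ => exact A.edge_vert hadj
  have key : ∀ {u t : (A ⊔ B).verts} (_ : (A ⊔ B).coe.Walk u t),
      A.spanningCoe.Reachable v ↑u → A.spanningCoe.Reachable v ↑t := by
    intro u t p
    induction p with
    | nil => exact id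
    | @cons a b c h p ih =>
      intro hu
      apply ih
      have h' : (A ⊔ B).Adj ↑a ↑b := h
      rcases SimpleGraph.Subgraph.sup_adj.mp h' with hA | hB
      · exact hu.trans ⟨SimpleGraph.Walk.cons (by exact hA) SimpleGraph.Walk.nil⟩
      · exfalso
        have haB : (a : V) ∈ B.verts := B.edge_vert hB
        have haA : (a : V) ∈ A.verts := memA _ hu
        have : (a : V) ∈ X ∪ {v} := by rw [← hV]; exact ⟨haA, haB⟩
        rcases this with hX' | hv'
        · exact hcon _ hX' hu
        · have : (b : V) ∈ B.neighborSet v := by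
            simp only [Set.mem_singleton_iff] at hv'
            subst hv'
            exact hB
          rw [hB0] at this
          exact this
  have hreach := hConn.preconnected ⟨v, hvS⟩ ⟨x, hxS⟩
  obtain ⟨w⟩ := hreach
  exact hcon x hxX (key w (SimpleGraph.Reachable.refl v))
end
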